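/- Let N ≥ 2, let A be a Hermitian N×N complex matrix with τ = tr A, let v ∈ ℂ^N be a unit vector with α = ⟨v, A v⟩, and assume α > 0, τ > 0 and Nα > τ. If A − ((τ − α)/(N − 1))·𝟙 and α·𝟙 − A are both positive semidefinite, then the Choi matrix Z_A = (1/α)·A ⊗ P + (1/(N/τ − 1/α))·(𝟙 − A/α) ⊗ (𝟙/τ − P/α) is positive semidefinite. -/

import Mathlib

open Matrix Kronecker ComplexOrder

private lemma kron_conjTranspose {n m : Type*} [Fintype n] [Fintype m]
    (A : Matrix n n ℂ) (B : Matrix m m ℂ) : (A ⊗ₖ B)ᴴ = Aᴴ ⊗ₖ Bᴴ := by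
  ext ⟨i, j⟩ ⟨k, l⟩
  simp [conjTranspose_apply, kroneckerMap_apply]

private lemma posSemidef_iff_eq_transpose_mul_self {n : Type*} [Fintype n] [DecidableEq n]
    {A : Matrix n n ℂ} : A.PosSemidef ↔ ∃ B : Matrix n n ℂ, A = Bᴴ * B := by
  open scoped MatrixOrder in
  constructor
  · intro hA
    obtain ⟨B, rfl⟩ := CStarAlgebra.nonneg_iff_eq_star_mul_self.mp hA.nonneg
    exact ⟨B, rfl⟩
  · rintro ⟨B, rfl⟩
    exact posSemidef_conjTranspose_mul_self B

private lemma kron_posSemidef {n m : Type*} [Fintype n] [Fintype m]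
    [DecidableEq n] [DecidableEq m] {A : Matrix n n ℂ} {B : Matrix m m ℂ}
    (hA : A.PosSemidef) (hB : B.PosSemidef) : (A ⊗ₖ B).PosSemidef := by
  obtain ⟨C, rfl⟩ := posSemidef_iff_eq_transpose_mul_self.mp hA
  obtain ⟨D, rfl⟩ := posSemidef_iff_eq_transpose_mul_self.mp hB
  rw [mul_kronecker_mul, ← kron_conjTranspose]
  exact posSemidef_conjTranspose_mul_self _

private lemma smul_posSemidef {n : Type*} [Fintype n] {A : Matrix n n ℂ}
    (hA : A.PosSemidef) {c : ℝ} (hc : 0 ≤ c) : ((c : ℂ) • A).PosSemidef := by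
  refine posSemidef_iff_dotProduct_mulVec.mpr ⟨?_, ?_⟩
  · unfold Matrix.IsHermitian
    rw [conjTranspose_smul, hA.1.eq]
    congr 1
    simp
  · intro x
    rw [smul_mulVec, dotProduct_smul, smul_eq_mul]
    exact mul_nonneg (by exact_mod_cast hc) (hA.dotProduct_mulVec_nonneg x)

/-- If `A − ((τ − α)/(N − 1))·𝟙` and `α·𝟙 − A` are both positive
semidefinite then the Choi matrix `Z_A` is positive semidefinite. -/
theorem choi_posSemidef_of_bounds (N : ℕ) (hN : 2 ≤ N)
    (A : Matrix (Fin N) (Fin N) ℂ) (hA : A.IsHermitian)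
    (v : Fin N → ℂ) (hv : star v ⬝ᵥ v = 1)
    (τ α : ℝ) (hτ : A.trace = (τ : ℂ)) (hα : star v ⬝ᵥ A.mulVec v = (α : ℂ))
    (hα0 : 0 < α) (hτ0 : 0 < τ) (hNα : τ < (N : ℝ) * α)
    (P : Matrix (Fin N) (Fin N) ℂ) (hP : P = vecMulVec (star v) v)
    (Z : Matrix (Fin N × Fin N) (Fin N × Fin N) ℂ)
    (hZ : Z = ((α : ℂ))⁻¹ • (A ⊗ₖ P) +
      ((((N : ℝ) / τ - 1 / α : ℝ) : ℂ))⁻¹ •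
        ((1 - ((α : ℂ))⁻¹ • A) ⊗ₖ (((τ : ℂ))⁻¹ • 1 - ((α : ℂ))⁻¹ • P)))
    (hlow : (A - ((((τ - α) / ((N : ℝ) - 1)) : ℝ) : ℂ) • 1).PosSemidef)
    (hupp : (((α : ℝ) : ℂ) • 1 - A).PosSemidef) :
    Z.PosSemidef := by
  -- numeric facts
  have hN1 : (1 : ℝ) < (N : ℝ) := by exact_mod_cast lt_of_lt_of_le one_lt_two hN
  have hD : (0 : ℝ) < (N : ℝ) * α - τ := by linarith
  have hτ' : (τ : ℂ) ≠ 0 := by exact_mod_cast hτ0.ne'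
  have hα' : (α : ℂ) ≠ 0 := by exact_mod_cast hα0.ne'
  have hD' : ((N : ℂ) * (α : ℂ) - (τ : ℂ)) ≠ 0 := by
    have : (((N : ℝ) * α - τ : ℝ) : ℂ) ≠ 0 := by exact_mod_cast hD.ne'
    push_cast at this
    exact this
  have hNc' : ((N : ℂ) - 1) ≠ 0 := by
    have : (((N : ℝ) - 1 : ℝ) : ℂ) ≠ 0 := by
      exact_mod_cast (sub_pos.mpr hN1).ne'
    push_cast at this
    exact this
  -- P is a Hermitian projection
  have hPH : P.IsHermitian := by
    rw [hP]
    ext i j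
    simp [Matrix.IsHermitian, conjTranspose_apply, vecMulVec_apply, mul_comm]
  have hPP : P * P = P := by
    rw [hP]
    ext i j
    simp only [mul_apply, vecMulVec_apply, Pi.star_apply]
    have : ∑ k, star (v i) * v k * (star (v k) * v j)
        = (star (v i) * v j) * ∑ k, star (v k) * v k := by
      rw [Finset.mul_sum]; apply Finset.sum_congr rfl; intro k _; ring
    rw [this]
    have hv' : ∑ k, star (v k) * v k = 1 := hv
    rw [hv', mul_one]
  have hPpsd : P.PosSemidef := by
    rw [hP]
    have : vecMulVec (star v) v = (replicateRow Unit v)ᴴ * replicateRow Unit v := by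
      ext i j
      simp [vecMulVec_apply, mul_apply, conjTranspose_apply, replicateRow_apply]
    rw [this]
    exact posSemidef_conjTranspose_mul_self _
  have hQpsd : (1 - P).PosSemidef := by
    refine posSemidef_iff_eq_transpose_mul_self.mpr ⟨1 - P, ?_⟩
    have h1 : (1 - P)ᴴ = 1 - P := by
      rw [conjTranspose_sub, conjTranspose_one, hPH.eq]
    rw [h1, sub_mul, mul_sub, mul_sub, hPP]
    simp only [mul_one, one_mul]
    abel
  -- the key decomposition of Z
  have hkey : Z = (((((N : ℝ) - 1) / ((N : ℝ) * α - τ)) : ℝ) : ℂ) •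
        ((A - ((((τ - α) / ((N : ℝ) - 1)) : ℝ) : ℂ) • 1) ⊗ₖ P) +
      ((((((N : ℝ) * α - τ))⁻¹ : ℝ) : ℂ) •
        ((((α : ℝ) : ℂ) • 1 - A) ⊗ₖ (1 - P))) := by
    have h2 : ((N : ℝ) / τ - 1 / α) = ((N : ℝ) * α - τ) / (τ * α) := by
      field_simp
    rw [hZ, h2]
    have hD'' : (α : ℂ) * (N : ℂ) - (τ : ℂ) ≠ 0 := by rw [mul_comm]; exact hD'
    ext ⟨i, j⟩ ⟨k, l⟩
    simp only [Matrix.add_apply, Matrix.smul_apply, kroneckerMap_apply,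
      Matrix.sub_apply, Matrix.one_apply, smul_eq_mul]
    push_cast
    by_cases hik : i = k <;> by_cases hjl : j = l <;>
      simp only [hik, hjl, if_pos, if_neg, ite_true, ite_false] <;>
      field_simp <;> ring
  rw [hkey]
  have hlow' := kron_posSemidef hlow hPpsd
  have hupp' := kron_posSemidef hupp hQpsd
  exact (smul_posSemidef hlow' (div_nonneg (by linarith) hD.le)).add
    (smul_posSemidef hupp' (inv_nonneg.mpr hD.le))
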